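/- Let $0<p_1\le u_1<\infty$, $0<p_2\le u_2<\infty$ and $j\in\mathbb{N}_0$, and consider the identity operator $\mathrm{id}_j: m^{2^{jd}}_{u_1,p_1}\to m^{2^{jd}}_{u_2,p_2}$ between the finite-dimensional Morrey sequence spaces on the cube $Q_{-j,0}$. Then its operator norm satisfies: $\|\mathrm{id}_j\|=1$ if ($p_1\ge p_2$ and $u_2\ge u_1$) or ($p_1<p_2$ and $p_2/u_2\le p_1/u_1$); $\|\mathrm{id}_j\|=2^{jd(1/u_2-1/u_1)}$ if $p_1\ge p_2$ and $u_2<u_1$; and in the remaining case $p_1<p_2$ and $p_2/u_2>p_1/u_1$ there exists a constant $c\in(0,1]$ independent of $j$ with $c\,2^{jd(1/u_2-p_1/(u_1p_2))}\le\|\mathrm{id}_j\|\le 2^{jd(1/u_2-p_1/(u_1p_2))}$. -/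

import Mathlib

open scoped ENNReal NNReal BigOperators
open Filter

/-- The unit cube `Q_{0,k}` is contained in the dyadic cube `Q_{-j,m}` of side length `2^j`. -/
def inDyadic (d j : ℕ) (m k : Fin d → ℤ) : Prop :=
  ∀ i, 2 ^ j * m i ≤ k i ∧ k i < 2 ^ j * (m i + 1)

/-- The Morrey sequence space quasi-norm `‖λ | m_{u,p}(ℤ^d)‖`, with values in `ℝ≥0∞`. -/
noncomputable def morreyNorm (d : ℕ) (u p : ℝ) (lam : (Fin d → ℤ) → ℂ) : ℝ≥0∞ :=
  ⨆ (j : ℕ) (m : Fin d → ℤ),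
    ((2 : ℝ≥0∞) ^ (j * d)) ^ (1 / u - 1 / p) *
      (∑' k : {k : Fin d → ℤ // inDyadic d j m k}, (‖lam k.1‖₊ : ℝ≥0∞) ^ p) ^ (1 / p)

/-- The `ℓ_r(ℤ^d)` norm. -/
noncomputable def lpNorm (d : ℕ) (r : ℝ) (lam : (Fin d → ℤ) → ℂ) : ℝ≥0∞ :=
  (∑' k : Fin d → ℤ, (‖lam k‖₊ : ℝ≥0∞) ^ r) ^ (1 / r)

/-- The `ℓ_∞(ℤ^d)` norm. -/
noncomputable def lInftyNorm (d : ℕ) (lam : (Fin d → ℤ) → ℂ) : ℝ≥0∞ :=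
  ⨆ k : Fin d → ℤ, (‖lam k‖₊ : ℝ≥0∞)

/-- The weak Lorentz `ℓ_{u,∞}(ℤ^d)` norm, via the distribution function. -/
noncomputable def weakNorm (d : ℕ) (u : ℝ) (lam : (Fin d → ℤ) → ℂ) : ℝ≥0∞ :=
  ⨆ t : ℝ≥0, (t : ℝ≥0∞) *
    (∑' _ : {k : Fin d → ℤ // (t : ℝ) < ‖lam k‖}, (1 : ℝ≥0∞)) ^ (1 / u)

/-- The norm of the level-`j` space `X^{(j)}_{u,p}(ℤ^d)`. -/
noncomputable def XjNorm (d : ℕ) (u p p' : ℝ) (j : ℕ) (lam : (Fin d → ℤ) → ℂ) : ℝ≥0∞ :=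
  ((2 : ℝ≥0∞) ^ (j * d)) ^ (1 / p - 1 / u) *
    ∑' m : Fin d → ℤ,
      (∑' k : {k : Fin d → ℤ // inDyadic d j m k}, (‖lam k.1‖₊ : ℝ≥0∞) ^ p') ^ (1 / p')

/-- The norm of `X_{u,p}(ℤ^d)`: infimum over decompositions `λ = ∑_j λ^{(j)}`. -/
noncomputable def XupNorm (d : ℕ) (u p p' : ℝ) (lam : (Fin d → ℤ) → ℂ) : ℝ≥0∞ :=
  ⨅ (L : ℕ → (Fin d → ℤ) → ℂ) (_ : ∀ k, HasSum (fun j => L j k) (lam k)),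
    ∑' j : ℕ, XjNorm d u p p' j (L j)

/-- Membership in `m_{u,p}(ℤ^d)`. -/
def MemMorrey (d : ℕ) (u p : ℝ) (lam : (Fin d → ℤ) → ℂ) : Prop :=
  morreyNorm d u p lam ≠ ⊤

/-- Membership in `m^{00}_{u,p}(ℤ^d)`, the closure of the finitely supported sequences. -/
def MemMorrey00 (d : ℕ) (u p : ℝ) (lam : (Fin d → ℤ) → ℂ) : Prop :=
  MemMorrey d u p lam ∧
    ∀ ε : ℝ≥0∞, 0 < ε → ∃ mu : (Fin d → ℤ) → ℂ,
      (Function.support mu).Finite ∧ morreyNorm d u p (lam - mu) < ε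

/-- `Q_{-ν,m} ⊆ Q_{-j,0}` for dyadic cubes. -/
def subCube (d j ν : ℕ) (m : Fin d → ℤ) : Prop :=
  ν ≤ j ∧ ∀ i, 0 ≤ m i ∧ 2 ^ ν * (m i + 1) ≤ 2 ^ j

/-- Norm of the finite-dimensional Morrey space `m^{2^{jd}}_{u,p}` on the cube `Q_{-j,0}`. -/
noncomputable def finMorreyNorm (d : ℕ) (u p : ℝ) (j : ℕ) (lam : (Fin d → ℤ) → ℂ) : ℝ≥0∞ :=
  ⨆ (ν : ℕ) (m : Fin d → ℤ) (_ : subCube d j ν m),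
    ((2 : ℝ≥0∞) ^ (ν * d)) ^ (1 / u - 1 / p) *
      (∑' k : {k : Fin d → ℤ // inDyadic d ν m k}, (‖lam k.1‖₊ : ℝ≥0∞) ^ p) ^ (1 / p)

/-- Operator norm of `id_j : m^{2^{jd}}_{u₁,p₁} → m^{2^{jd}}_{u₂,p₂}`. -/
noncomputable def morreyOpNorm (d : ℕ) (u₁ p₁ u₂ p₂ : ℝ) (j : ℕ) : ℝ≥0∞ :=
  ⨆ (lam : (Fin d → ℤ) → ℂ) (_ : finMorreyNorm d u₁ p₁ j lam ≤ 1),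
    finMorreyNorm d u₂ p₂ j lam

namespace MorreyAux

noncomputable def E (r : ℝ) : ℝ≥0∞ := (2 : ℝ≥0∞) ^ r

lemma E_add (a b : ℝ) : E (a + b) = E a * E b :=
  ENNReal.rpow_add _ _ two_ne_zero ENNReal.ofNat_ne_top

lemma E_mono {a b : ℝ} (h : a ≤ b) : E a ≤ E b :=
  ENNReal.rpow_le_rpow_of_exponent_le one_le_two h

lemma E_zero : E 0 = 1 := ENNReal.rpow_zero

lemma E_rpow (a b : ℝ) : (E a) ^ b = E (a * b) := (ENNReal.rpow_mul 2 a b).symm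

lemma E_ne_top (a : ℝ) : E a ≠ ⊤ := by
  simp [E, ENNReal.rpow_eq_top_iff]

lemma E_ne_zero (a : ℝ) : E a ≠ 0 := by
  simp [E, ENNReal.rpow_eq_zero_iff]

lemma E_le_one {a : ℝ} (h : a ≤ 0) : E a ≤ 1 := by
  simpa [E_zero] using E_mono h

lemma pow_eq_E (n : ℕ) : (2 : ℝ≥0∞) ^ n = E n := (ENNReal.rpow_natCast 2 n).symm

lemma E_cancel {x : ℝ} {a b : ℝ≥0∞} (h : E x * a ≤ b) : a ≤ E (-x) * b := by
  have : E (-x) * (E x * a) ≤ E (-x) * b := mul_le_mul_right h _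
  calc a = E (-x) * E x * a := by rw [← E_add]; simp [E_zero]
  _ = E (-x) * (E x * a) := by ring
  _ ≤ E (-x) * b := this

lemma E_mul_le_E {x y : ℝ} {a : ℝ≥0∞} (ha : a ≤ E (y - x)) : E x * a ≤ E y := by
  calc E x * a ≤ E x * E (y - x) := mul_le_mul_right ha _
  _ = E y := by rw [← E_add]; ring_nf

/-- equivalence of the cube with a pi type -/
def dyadicEquiv (d ν : ℕ) (m : Fin d → ℤ) :
    {k : Fin d → ℤ // inDyadic d ν m k} ≃ (Fin d → Fin (2 ^ ν)) where
  toFun k i := ⟨(k.1 i - 2 ^ ν * m i).toNat, by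
    have h := k.2 i
    have hx : (2:ℤ) ^ ν * (m i + 1) = 2 ^ ν * m i + 2 ^ ν := by ring
    have h2 : ((2:ℕ) ^ ν : ℤ) = (2:ℤ) ^ ν := by push_cast; ring
    omega⟩
  invFun e := ⟨fun i => 2 ^ ν * m i + (e i : ℤ), by
    intro i
    have h1 : ((e i : ℕ) : ℤ) < ((2:ℕ) ^ ν : ℤ) := by exact_mod_cast (e i).2
    have h2 : ((2:ℕ) ^ ν : ℤ) = (2:ℤ) ^ ν := by push_cast; ring
    have hx : (2:ℤ) ^ ν * (m i + 1) = 2 ^ ν * m i + 2 ^ ν := by ring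
    refine ⟨by beta_reduce; omega, by beta_reduce; omega⟩⟩
  left_inv k := by
    ext i
    have h := k.2 i
    have hx : (2:ℤ) ^ ν * (m i + 1) = 2 ^ ν * m i + 2 ^ ν := by ring
    have h2 : ((2:ℕ) ^ ν : ℤ) = (2:ℤ) ^ ν := by push_cast; ring
    simp only
    omega
  right_inv e := by
    funext i
    ext
    have h1 : ((e i : ℕ) : ℤ) < ((2:ℕ) ^ ν : ℤ) := by exact_mod_cast (e i).2
    have h2 : ((2:ℕ) ^ ν : ℤ) = (2:ℤ) ^ ν := by push_cast; ring
    simp only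
    omega

lemma tsum_dyadic (d ν : ℕ) (m : Fin d → ℤ) (f : (Fin d → ℤ) → ℝ≥0∞) :
    ∑' k : {k : Fin d → ℤ // inDyadic d ν m k}, f k.1
      = ∑ e : Fin d → Fin (2 ^ ν), f (fun i => 2 ^ ν * m i + (e i : ℤ)) := by
  rw [← Equiv.tsum_eq (dyadicEquiv d ν m).symm fun k => f k.1]
  exact tsum_fintype _

end MorreyAux

namespace MorreyAux

lemma one_dim_count (ν s : ℕ) (hs : s ≤ ν) :
    ∑ x : Fin (2 ^ ν), (if 2 ^ s ∣ (x : ℕ) then (1 : ℝ≥0∞) else 0) = 2 ^ (ν - s) := by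
  classical
  rw [Finset.sum_boole]
  have hpow : (2:ℕ) ^ ν = 2 ^ (ν - s) * 2 ^ s := by
    rw [← pow_add]; congr 1; omega
  have hcard : (Finset.univ.filter fun x : Fin (2 ^ ν) => 2 ^ s ∣ (x : ℕ)).card
      = 2 ^ (ν - s) := by
    rw [← Fintype.card_fin (2 ^ (ν - s)), ← Finset.card_univ]
    refine Finset.card_nbij'
      (fun x => ⟨(x : ℕ) / 2 ^ s, by
        have hx := x.2
        rw [Nat.div_lt_iff_lt_mul ((by positivity : 0 < 2 ^ s))]
        omega⟩)
      (fun y => ⟨2 ^ s * (y : ℕ), by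
        have hy := y.2
        calc 2 ^ s * (y:ℕ) < 2 ^ s * 2 ^ (ν - s) := by
              have h2 : 0 < (2:ℕ) ^ s := (by positivity : 0 < 2 ^ s)
              exact (Nat.mul_lt_mul_left h2).mpr hy
        _ = 2 ^ ν := by rw [hpow]; ring⟩)
      (fun a _ => Finset.mem_univ _)
      (fun y _ => by
        simp only [Finset.mem_coe, Finset.mem_filter, Finset.mem_univ, true_and]
        exact Dvd.intro _ rfl)
      (fun a ha => by
        simp only [Finset.mem_coe, Finset.mem_filter, Finset.mem_univ, true_and] at ha
        ext
        simp only
        exact Nat.mul_div_cancel' ha)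
      (fun y _ => by
        ext
        simp only
        exact Nat.mul_div_cancel_left _ ((by positivity : 0 < 2 ^ s)))
  rw [hcard]
  push_cast
  ring

lemma prod_ite_all (d : ℕ) (D : Fin d → Prop) [DecidablePred D] :
    ∏ i, (if D i then (1 : ℝ≥0∞) else 0) = if ∀ i, D i then 1 else 0 := by
  by_cases h : ∀ i, D i
  · rw [if_pos h]
    exact Finset.prod_eq_one fun i _ => if_pos (h i)
  · rw [if_neg h]
    push_neg at h
    obtain ⟨i, hi⟩ := h
    exact Finset.prod_eq_zero (Finset.mem_univ i) (if_neg hi)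

lemma count_dvd (d ν s : ℕ) (hs : s ≤ ν) (m : Fin d → ℤ) :
    ∑' k : {k : Fin d → ℤ // inDyadic d ν m k},
        (if ∀ i, (2 : ℤ) ^ s ∣ k.1 i then (1 : ℝ≥0∞) else 0)
      = 2 ^ ((ν - s) * d) := by
  classical
  rw [tsum_dyadic d ν m (fun k => if ∀ i, (2:ℤ) ^ s ∣ k i then (1:ℝ≥0∞) else 0)]
  have hdvd : ∀ (e : Fin d → Fin (2 ^ ν)) (i : Fin d),
      ((2:ℤ) ^ s ∣ 2 ^ ν * m i + ((e i : ℕ) : ℤ)) ↔ 2 ^ s ∣ (e i : ℕ) := by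
    intro e i
    have h1 : (2:ℤ) ^ s ∣ 2 ^ ν * m i :=
      Dvd.dvd.mul_right (pow_dvd_pow 2 hs) _
    rw [dvd_add_right h1]
    exact_mod_cast Int.natCast_dvd_natCast (m := 2 ^ s) (n := (e i : ℕ)) |>.symm
  calc ∑ e : Fin d → Fin (2 ^ ν),
        (if ∀ i, (2:ℤ) ^ s ∣ 2 ^ ν * m i + ((e i : ℕ) : ℤ) then (1:ℝ≥0∞) else 0)
      = ∑ e : Fin d → Fin (2 ^ ν), ∏ i, (if 2 ^ s ∣ (e i : ℕ) then (1:ℝ≥0∞) else 0) := by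
        refine Finset.sum_congr rfl fun e _ => ?_
        rw [prod_ite_all]
        simp only [hdvd]
    _ = (∑ x : Fin (2 ^ ν), if 2 ^ s ∣ (x : ℕ) then (1:ℝ≥0∞) else 0) ^ d := by
        rw [Fintype.sum_pow]
    _ = 2 ^ ((ν - s) * d) := by rw [one_dim_count ν s hs, ← pow_mul]

lemma count_const (d ν : ℕ) (m : Fin d → ℤ) (c : ℝ≥0∞) :
    ∑' _ : {k : Fin d → ℤ // inDyadic d ν m k}, c = 2 ^ (ν * d) * c := by
  rw [tsum_dyadic d ν m (fun _ => c), Finset.sum_const, Finset.card_univ]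
  have : Fintype.card (Fin d → Fin (2 ^ ν)) = 2 ^ (ν * d) := by
    rw [Fintype.card_fun]
    simp [← pow_mul]
  rw [this, nsmul_eq_mul]
  push_cast
  ring

lemma tsum_zero_cube (d : ℕ) (m : Fin d → ℤ) (f : (Fin d → ℤ) → ℝ≥0∞) :
    ∑' k : {k : Fin d → ℤ // inDyadic d 0 m k}, f k.1 = f m := by
  rw [tsum_dyadic]
  have h1 : ∀ e : Fin d → Fin (2 ^ 0), (fun i => 2 ^ 0 * m i + ((e i : ℕ) : ℤ)) = m := by
    intro e; funext i
    have h2 : (e i : ℕ) < 2 ^ 0 := (e i).2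
    have : (e i : ℕ) = 0 := by omega
    simp [this]
  rw [Finset.sum_congr rfl (fun e _ => by rw [h1 e]), Finset.sum_const, Finset.card_univ]
  have : Fintype.card (Fin d → Fin (2 ^ 0)) = 1 := by
    rw [Fintype.card_fun]
    norm_num
  rw [this, one_smul]

end MorreyAux

namespace MorreyAux

lemma prefactor_eq (n : ℕ) (r : ℝ) : ((2 : ℝ≥0∞) ^ n) ^ r = E (n * r) := by
  rw [pow_eq_E, E_rpow]

lemma subCube_self (d j : ℕ) : subCube d j j (fun _ => 0) :=
  ⟨le_rfl, fun _ => ⟨le_rfl, by norm_num⟩⟩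

lemma subCube_zero (d j : ℕ) (k : Fin d → ℤ) (hk : inDyadic d j 0 k) : subCube d j 0 k := by
  refine ⟨Nat.zero_le _, fun i => ?_⟩
  have h := hk i
  simp only [Pi.zero_apply] at h
  constructor
  · linarith [h.1, h.2]
  · have : k i < 2 ^ j := by linarith [h.2]
    linarith

lemma inDyadic_zero_zero (d j : ℕ) : inDyadic d j 0 (0 : Fin d → ℤ) := by
  intro i
  simp only [Pi.zero_apply]
  constructor
  · norm_num
  · positivity

lemma inDyadic_mono {d j ν : ℕ} {m k : Fin d → ℤ} (hsub : subCube d j ν m)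
    (hk : inDyadic d ν m k) : inDyadic d j 0 k := by
  intro i
  have h1 := hsub.2 i
  have h2 := hk i
  have h3 : (0:ℤ) ≤ 2 ^ ν * m i := mul_nonneg (by positivity) h1.1
  constructor
  · simp only [Pi.zero_apply]; linarith [h2.1]
  · simp only [Pi.zero_apply]
    have : k i < 2 ^ j := lt_of_lt_of_le h2.2 h1.2
    linarith

lemma term_le_norm (d : ℕ) (u p : ℝ) (j ν : ℕ) (m : Fin d → ℤ) (lam : (Fin d → ℤ) → ℂ)
    (h : subCube d j ν m) :
    ((2 : ℝ≥0∞) ^ (ν * d)) ^ (1 / u - 1 / p) *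
      (∑' k : {k : Fin d → ℤ // inDyadic d ν m k}, (‖lam k.1‖₊ : ℝ≥0∞) ^ p) ^ (1 / p)
      ≤ finMorreyNorm d u p j lam := by
  refine le_trans ?_ (le_iSup _ ν)
  refine le_trans ?_ (le_iSup _ m)
  exact le_iSup_of_le h le_rfl

lemma norm_le_of (d : ℕ) (u p : ℝ) (j : ℕ) (lam : (Fin d → ℤ) → ℂ) (C : ℝ≥0∞)
    (h : ∀ ν m, subCube d j ν m →
      ((2 : ℝ≥0∞) ^ (ν * d)) ^ (1 / u - 1 / p) *
        (∑' k : {k : Fin d → ℤ // inDyadic d ν m k}, (‖lam k.1‖₊ : ℝ≥0∞) ^ p) ^ (1 / p) ≤ C) :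
    finMorreyNorm d u p j lam ≤ C := by
  refine iSup_le fun ν => iSup_le fun m => iSup_le fun hsub => h ν m hsub

lemma rpow_rpow_self (x : ℝ≥0∞) {p : ℝ} (hp : p ≠ 0) : (x ^ p) ^ (1 / p) = x := by
  rw [← ENNReal.rpow_mul, mul_one_div, div_self hp, ENNReal.rpow_one]

lemma rpow_inv_self (x : ℝ≥0∞) {p : ℝ} (hp : p ≠ 0) : (x ^ (1 / p)) ^ p = x := by
  rw [← ENNReal.rpow_mul, one_div, inv_mul_cancel₀ hp, ENNReal.rpow_one]

lemma sum_le_of_norm_le_one {d : ℕ} {u p : ℝ} {j ν : ℕ} {m : Fin d → ℤ}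
    {lam : (Fin d → ℤ) → ℂ} (hp : 0 < p)
    (hnorm : finMorreyNorm d u p j lam ≤ 1) (hsub : subCube d j ν m) :
    (∑' k : {k : Fin d → ℤ // inDyadic d ν m k}, (‖lam k.1‖₊ : ℝ≥0∞) ^ p)
      ≤ E ((ν * d : ℕ) * (p / u - 1) * (-1)) := by
  have h1 := le_trans (term_le_norm d u p j ν m lam hsub) hnorm
  rw [prefactor_eq] at h1
  have h2 : (∑' k : {k : Fin d → ℤ // inDyadic d ν m k}, (‖lam k.1‖₊ : ℝ≥0∞) ^ p) ^ (1/p)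
      ≤ E (-((ν * d : ℕ) * (1 / u - 1 / p))) := by
    have := E_cancel h1
    simpa using this
  have h3 := ENNReal.rpow_le_rpow h2 (le_of_lt hp)
  rw [rpow_inv_self _ (ne_of_gt hp), E_rpow] at h3
  refine le_trans h3 (le_of_eq (congrArg E ?_))
  have hip : (1 / p) * p = 1 := by field_simp
  linear_combination (((ν * d : ℕ) : ℝ)) * hip

lemma elem_le_of_norm_le_one {d : ℕ} {u p : ℝ} {j : ℕ} {k : Fin d → ℤ}
    {lam : (Fin d → ℤ) → ℂ} (hp : 0 < p)
    (hnorm : finMorreyNorm d u p j lam ≤ 1) (hk : inDyadic d j 0 k) :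
    (‖lam k‖₊ : ℝ≥0∞) ≤ 1 := by
  have h1 := le_trans (term_le_norm d u p j 0 k lam (subCube_zero d j k hk)) hnorm
  rw [tsum_zero_cube d k (fun k => (‖lam k‖₊ : ℝ≥0∞) ^ p)] at h1
  rw [rpow_rpow_self _ (ne_of_gt hp)] at h1
  simpa using h1

lemma le_opNorm (d : ℕ) (u₁ p₁ u₂ p₂ : ℝ) (j : ℕ) (lam : (Fin d → ℤ) → ℂ) (x : ℝ≥0∞)
    (h1 : finMorreyNorm d u₁ p₁ j lam ≤ 1) (h2 : x ≤ finMorreyNorm d u₂ p₂ j lam) :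
    x ≤ morreyOpNorm d u₁ p₁ u₂ p₂ j := by
  refine le_trans h2 ?_
  refine le_trans ?_ (le_iSup _ lam)
  exact le_iSup_of_le h1 le_rfl

lemma opNorm_le (d : ℕ) (u₁ p₁ u₂ p₂ : ℝ) (j : ℕ) (C : ℝ≥0∞)
    (h : ∀ lam, finMorreyNorm d u₁ p₁ j lam ≤ 1 → finMorreyNorm d u₂ p₂ j lam ≤ C) :
    morreyOpNorm d u₁ p₁ u₂ p₂ j ≤ C :=
  iSup_le fun lam => iSup_le fun hlam => h lam hlam

end MorreyAux

namespace MorreyAux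

lemma sum_weights (d ν : ℕ) : ∑ _e : Fin d → Fin (2 ^ ν), E (-((ν * d : ℕ) : ℝ)) = 1 := by
  rw [Finset.sum_const, Finset.card_univ]
  have : Fintype.card (Fin d → Fin (2 ^ ν)) = 2 ^ (ν * d) := by
    rw [Fintype.card_fun]; simp [← pow_mul]
  rw [this, nsmul_eq_mul]
  push_cast
  rw [pow_eq_E, ← E_add]
  simp [E_zero]

lemma tsum_rpow_le (d ν : ℕ) (m : Fin d → ℤ) (f : (Fin d → ℤ) → ℝ≥0∞) {q : ℝ}
    (h0 : 0 < q) (h1 : q ≤ 1) :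
    ∑' k : {k : Fin d → ℤ // inDyadic d ν m k}, (f k.1) ^ q
      ≤ E (((ν * d : ℕ) : ℝ) * (1 - q)) *
        (∑' k : {k : Fin d → ℤ // inDyadic d ν m k}, f k.1) ^ q := by
  classical
  set n : ℝ := ((ν * d : ℕ) : ℝ) with hn
  rw [tsum_dyadic d ν m (fun k => f k ^ q), tsum_dyadic d ν m f]
  set g : (Fin d → Fin (2 ^ ν)) → ℝ≥0∞ := fun e => f (fun i => 2 ^ ν * m i + ((e i : ℕ) : ℤ))
    with hg
  have hp : (1 : ℝ) ≤ 1 / q := by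
    rw [le_div_iff₀ h0]; linarith
  have key := ENNReal.rpow_arith_mean_le_arith_mean_rpow Finset.univ
    (fun _ : Fin d → Fin (2 ^ ν) => E (-n)) (fun e => (g e) ^ q) (sum_weights d ν) hp
  have hz : ∀ e : Fin d → Fin (2 ^ ν), ((g e) ^ q) ^ (1 / q) = g e :=
    fun e => rpow_rpow_self _ (ne_of_gt h0)
  simp only [hz] at key
  rw [← Finset.mul_sum, ← Finset.mul_sum] at key
  have key2 := ENNReal.rpow_le_rpow key (le_of_lt h0)
  rw [rpow_inv_self _ (ne_of_gt h0), ENNReal.mul_rpow_of_nonneg _ _ (le_of_lt h0), E_rpow]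
    at key2
  have key3 := E_cancel key2
  calc ∑ e, (g e) ^ q ≤ E (-(-n)) * (E (-n * q) * (∑ e, g e) ^ q) := key3
  _ = (E (-(-n)) * E (-n * q)) * (∑ e, g e) ^ q := by ring
  _ = E (n * (1 - q)) * (∑ e, g e) ^ q := by rw [← E_add]; ring_nf

end MorreyAux

namespace MorreyAux

lemma regimeA {d : ℕ} {u₁ p₁ u₂ p₂ : ℝ} {j ν : ℕ} {m : Fin d → ℤ} {lam : (Fin d → ℤ) → ℂ}
    (hp₁ : 0 < p₁) (hpu₁ : p₁ ≤ u₁) (hp₂ : 0 < p₂) (hle : p₂ ≤ p₁)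
    (hnorm : finMorreyNorm d u₁ p₁ j lam ≤ 1) (hsub : subCube d j ν m) :
    ((2 : ℝ≥0∞) ^ (ν * d)) ^ (1 / u₂ - 1 / p₂) *
      (∑' k : {k : Fin d → ℤ // inDyadic d ν m k}, (‖lam k.1‖₊ : ℝ≥0∞) ^ p₂) ^ (1 / p₂)
      ≤ E (((ν * d : ℕ) : ℝ) * (1 / u₂ - 1 / u₁)) := by
  have hu₁ : 0 < u₁ := lt_of_lt_of_le hp₁ hpu₁
  set n : ℝ := ((ν * d : ℕ) : ℝ) with hn
  set q : ℝ := p₂ / p₁ with hq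
  have hq0 : 0 < q := div_pos hp₂ hp₁
  have hq1 : q ≤ 1 := by rw [div_le_one hp₁]; exact hle
  have hmul : p₁ * q = p₂ := by rw [hq]; field_simp
  have hstep := tsum_rpow_le d ν m (fun k => (‖lam k‖₊ : ℝ≥0∞) ^ p₁) hq0 hq1
  have hrw : (∑' k : {k : Fin d → ℤ // inDyadic d ν m k},
      ((fun k => (‖lam k‖₊ : ℝ≥0∞) ^ p₁) k.1) ^ q)
      = ∑' k : {k : Fin d → ℤ // inDyadic d ν m k}, (‖lam k.1‖₊ : ℝ≥0∞) ^ p₂ := by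
    refine tsum_congr fun k => ?_
    rw [← ENNReal.rpow_mul, hmul]
  rw [hrw] at hstep
  have hS1 := sum_le_of_norm_le_one hp₁ hnorm hsub
  have hS1q : (∑' k : {k : Fin d → ℤ // inDyadic d ν m k}, (‖lam k.1‖₊ : ℝ≥0∞) ^ p₁) ^ q
      ≤ E (n * (p₁ / u₁ - 1) * (-1) * q) := by
    rw [← E_rpow]
    exact ENNReal.rpow_le_rpow hS1 (le_of_lt hq0)
  have hS2 : (∑' k : {k : Fin d → ℤ // inDyadic d ν m k}, (‖lam k.1‖₊ : ℝ≥0∞) ^ p₂)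
      ≤ E (n * (1 - q) + n * (p₁ / u₁ - 1) * (-1) * q) := by
    rw [E_add]
    exact le_trans hstep (mul_le_mul_right hS1q _)
  have hS2r : (∑' k : {k : Fin d → ℤ // inDyadic d ν m k},
        (‖lam k.1‖₊ : ℝ≥0∞) ^ p₂) ^ (1 / p₂)
      ≤ E ((n * (1 - q) + n * (p₁ / u₁ - 1) * (-1) * q) * (1 / p₂)) := by
    rw [← E_rpow]
    exact ENNReal.rpow_le_rpow hS2 (by positivity)
  rw [prefactor_eq]
  refine le_trans (mul_le_mul_right hS2r _) ?_
  rw [← E_add]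
  refine le_of_eq (congrArg E ?_)
  rw [hq, hn]
  push_cast
  field_simp
  ring

lemma regimeB {d : ℕ} {u₁ p₁ u₂ p₂ : ℝ} {j ν : ℕ} {m : Fin d → ℤ} {lam : (Fin d → ℤ) → ℂ}
    (hp₁ : 0 < p₁) (hpu₁ : p₁ ≤ u₁) (hp₂ : 0 < p₂) (hle : p₁ ≤ p₂)
    (hnorm : finMorreyNorm d u₁ p₁ j lam ≤ 1) (hsub : subCube d j ν m) :
    ((2 : ℝ≥0∞) ^ (ν * d)) ^ (1 / u₂ - 1 / p₂) *
      (∑' k : {k : Fin d → ℤ // inDyadic d ν m k}, (‖lam k.1‖₊ : ℝ≥0∞) ^ p₂) ^ (1 / p₂)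
      ≤ E (((ν * d : ℕ) : ℝ) * (1 / u₂ - p₁ / (u₁ * p₂))) := by
  have hu₁ : 0 < u₁ := lt_of_lt_of_le hp₁ hpu₁
  set n : ℝ := ((ν * d : ℕ) : ℝ) with hn
  have hmono : (∑' k : {k : Fin d → ℤ // inDyadic d ν m k}, (‖lam k.1‖₊ : ℝ≥0∞) ^ p₂)
      ≤ ∑' k : {k : Fin d → ℤ // inDyadic d ν m k}, (‖lam k.1‖₊ : ℝ≥0∞) ^ p₁ := by
    refine ENNReal.tsum_le_tsum fun k => ?_
    have h1 : (‖lam k.1‖₊ : ℝ≥0∞) ≤ 1 :=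
      elem_le_of_norm_le_one hp₁ hnorm (inDyadic_mono hsub k.2)
    exact ENNReal.rpow_le_rpow_of_exponent_ge h1 hle
  have hS1 := sum_le_of_norm_le_one hp₁ hnorm hsub
  have hS2r : (∑' k : {k : Fin d → ℤ // inDyadic d ν m k},
        (‖lam k.1‖₊ : ℝ≥0∞) ^ p₂) ^ (1 / p₂)
      ≤ E (n * (p₁ / u₁ - 1) * (-1) * (1 / p₂)) := by
    rw [← E_rpow]
    exact ENNReal.rpow_le_rpow (le_trans hmono hS1) (by positivity)
  rw [prefactor_eq]
  refine le_trans (mul_le_mul_right hS2r _) ?_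
  rw [← E_add]
  refine le_of_eq (congrArg E ?_)
  rw [hn]
  push_cast
  field_simp
  ring

end MorreyAux

namespace MorreyAux

lemma norm_le_one_of_terms {d : ℕ} {u p : ℝ} {j : ℕ} {lam : (Fin d → ℤ) → ℂ} {A : ℝ}
    (hA : A ≤ 0)
    (h : ∀ ν m, subCube d j ν m →
      ((2 : ℝ≥0∞) ^ (ν * d)) ^ (1 / u - 1 / p) *
        (∑' k : {k : Fin d → ℤ // inDyadic d ν m k}, (‖lam k.1‖₊ : ℝ≥0∞) ^ p) ^ (1 / p)
        ≤ E (((ν * d : ℕ) : ℝ) * A)) :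
    finMorreyNorm d u p j lam ≤ 1 := by
  refine norm_le_of d u p j lam 1 fun ν m hsub => ?_
  refine le_trans (h ν m hsub) (E_le_one ?_)
  exact mul_nonpos_of_nonneg_of_nonpos (Nat.cast_nonneg _) hA

lemma norm_le_pow_of_terms {d : ℕ} {u p : ℝ} {j : ℕ} {lam : (Fin d → ℤ) → ℂ} {A : ℝ}
    (hA : 0 ≤ A)
    (h : ∀ ν m, subCube d j ν m →
      ((2 : ℝ≥0∞) ^ (ν * d)) ^ (1 / u - 1 / p) *
        (∑' k : {k : Fin d → ℤ // inDyadic d ν m k}, (‖lam k.1‖₊ : ℝ≥0∞) ^ p) ^ (1 / p)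
        ≤ E (((ν * d : ℕ) : ℝ) * A)) :
    finMorreyNorm d u p j lam ≤ E (((j * d : ℕ) : ℝ) * A) := by
  refine norm_le_of d u p j lam _ fun ν m hsub => ?_
  refine le_trans (h ν m hsub) (E_mono ?_)
  refine mul_le_mul_of_nonneg_right ?_ hA
  exact_mod_cast Nat.cast_le.mpr (Nat.mul_le_mul_right d hsub.1)

lemma nnnorm_ite_pow {P : Prop} [Decidable P] {p : ℝ} (hp : 0 < p) :
    (‖(if P then (1:ℂ) else 0)‖₊ : ℝ≥0∞) ^ p = if P then 1 else 0 := by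
  by_cases h : P
  · simp [h]
  · simp [h, ENNReal.zero_rpow_of_pos hp]

lemma delta_norm (d : ℕ) (u p : ℝ) (hp : 0 < p) (hpu : p ≤ u) (j : ℕ) :
    finMorreyNorm d u p j (fun k => if k = 0 then 1 else 0) = 1 := by
  classical
  have hu : 0 < u := lt_of_lt_of_le hp hpu
  refine le_antisymm ?_ ?_
  · refine norm_le_of d u p j _ 1 fun ν m hsub => ?_
    have hsum : (∑' k : {k : Fin d → ℤ // inDyadic d ν m k},
        (‖(if k.1 = 0 then (1:ℂ) else 0)‖₊ : ℝ≥0∞) ^ p) ≤ 1 := by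
      have h1 : (∑' k : {k : Fin d → ℤ // inDyadic d ν m k},
          (‖(if k.1 = 0 then (1:ℂ) else 0)‖₊ : ℝ≥0∞) ^ p)
          = ∑' k : {k : Fin d → ℤ // inDyadic d ν m k},
            (if k.1 = (0 : Fin d → ℤ) then (1:ℝ≥0∞) else 0) :=
        tsum_congr fun k => nnnorm_ite_pow hp
      rw [h1]
      refine le_trans (ENNReal.tsum_comp_le_tsum_of_injective Subtype.val_injective
        (fun k => if k = (0 : Fin d → ℤ) then (1:ℝ≥0∞) else 0)) ?_
      simp
    calc ((2 : ℝ≥0∞) ^ (ν * d)) ^ (1 / u - 1 / p) *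
        (∑' k : {k : Fin d → ℤ // inDyadic d ν m k},
          (‖(if k.1 = 0 then (1:ℂ) else 0)‖₊ : ℝ≥0∞) ^ p) ^ (1 / p)
        ≤ ((2 : ℝ≥0∞) ^ (ν * d)) ^ (1 / u - 1 / p) * 1 := by
          exact mul_le_mul_right (ENNReal.rpow_le_one hsum (by positivity)) _
    _ ≤ 1 := by
        rw [mul_one, prefactor_eq]
        refine E_le_one ?_
        refine mul_nonpos_of_nonneg_of_nonpos (Nat.cast_nonneg _) ?_
        have := one_div_le_one_div_of_le hp hpu
        linarith
  · have h0 : subCube d j 0 (0 : Fin d → ℤ) := subCube_zero d j 0 (inDyadic_zero_zero d j)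
    refine le_trans ?_ (term_le_norm d u p j 0 0 _ h0)
    rw [tsum_zero_cube d 0 (fun k => (‖(if k = 0 then (1:ℂ) else 0)‖₊ : ℝ≥0∞) ^ p)]
    simp only [if_pos rfl]
    rw [Nat.zero_mul, pow_zero, ENNReal.one_rpow, one_mul]
    simp [ENNReal.one_rpow]

end MorreyAux

namespace MorreyAux

lemma nnnorm_two_rpow (t : ℝ) : ((‖(((2:ℝ) ^ t : ℝ) : ℂ)‖₊ : ℝ≥0∞)) = E t := by
  rw [← enorm_eq_nnnorm, ← ofReal_norm, Complex.norm_real,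
    Real.norm_of_nonneg (Real.rpow_nonneg (by norm_num) t),
    ← ENNReal.ofReal_rpow_of_pos (by norm_num : (0:ℝ) < 2)]
  norm_num [E]

open scoped Classical in
lemma const_witness (d : ℕ) (u₁ p₁ u p : ℝ) (hp₁ : 0 < p₁) (hpu₁ : p₁ ≤ u₁)
    (hp : 0 < p) (j : ℕ) :
    (∀ ν m, subCube d j ν m →
      ((2 : ℝ≥0∞) ^ (ν * d)) ^ (1 / u - 1 / p) *
        (∑' k : {k : Fin d → ℤ // inDyadic d ν m k},
          (‖(fun k : Fin d → ℤ => if inDyadic d j 0 k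
              then (((2:ℝ) ^ (-(((j * d : ℕ) : ℝ)) / u₁) : ℝ) : ℂ) else 0) k.1‖₊ : ℝ≥0∞) ^ p)
          ^ (1 / p)
        = E (((ν * d : ℕ) : ℝ) / u - ((j * d : ℕ) : ℝ) / u₁)) := by
  intro ν m hsub
  have hu₁ : 0 < u₁ := lt_of_lt_of_le hp₁ hpu₁
  set t : ℝ := -(((j * d : ℕ) : ℝ)) / u₁ with ht
  have hsum : (∑' k : {k : Fin d → ℤ // inDyadic d ν m k},
      (‖(fun k : Fin d → ℤ => if inDyadic d j 0 k
          then (((2:ℝ) ^ t : ℝ) : ℂ) else 0) k.1‖₊ : ℝ≥0∞) ^ p)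
      = ∑' _ : {k : Fin d → ℤ // inDyadic d ν m k}, E (t * p) := by
    refine tsum_congr fun k => ?_
    simp only [if_pos (inDyadic_mono hsub k.2)]
    rw [nnnorm_two_rpow, E_rpow]
  rw [hsum, count_const, prefactor_eq, pow_eq_E, ← E_add, E_rpow, ← E_add]
  refine congrArg E ?_
  have hip : p * (1 / p) = 1 := by field_simp
  rw [ht]
  linear_combination (-(((j * d : ℕ) : ℝ)) / u₁) * hip

end MorreyAux

namespace MorreyAux

lemma count_dvd_le_one (d ν s : ℕ) (hν : ν ≤ s) (m : Fin d → ℤ) :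
    ∑' k : {k : Fin d → ℤ // inDyadic d ν m k},
      (if ∀ i, (2 : ℤ) ^ s ∣ k.1 i then (1 : ℝ≥0∞) else 0) ≤ 1 := by
  classical
  rw [tsum_dyadic d ν m (fun k => if ∀ i, (2:ℤ) ^ s ∣ k i then (1:ℝ≥0∞) else 0)]
  rw [Finset.sum_boole]
  have hcard : (Finset.univ.filter fun e : Fin d → Fin (2 ^ ν) =>
      ∀ i, (2:ℤ) ^ s ∣ 2 ^ ν * m i + ((e i : ℕ) : ℤ)).card ≤ 1 := by
    refine Finset.card_le_one.mpr fun e he e' he' => ?_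
    simp only [Finset.mem_filter, Finset.mem_univ, true_and] at he he'
    funext i
    ext
    have h2 : ((2:ℤ) ^ s) ∣ ((e i : ℕ) : ℤ) - ((e' i : ℕ) : ℤ) := by
      have h3 := dvd_sub (he i) (he' i)
      have h4 : (2 ^ ν * m i + ((e i : ℕ) : ℤ)) - (2 ^ ν * m i + ((e' i : ℕ) : ℤ))
          = ((e i : ℕ) : ℤ) - ((e' i : ℕ) : ℤ) := by ring
      rwa [h4] at h3
    obtain ⟨c, hc⟩ := h2
    have hb1 : ((e i : ℕ) : ℤ) < 2 ^ ν := by exact_mod_cast (e i).2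
    have hb2 : ((e' i : ℕ) : ℤ) < 2 ^ ν := by exact_mod_cast (e' i).2
    have hb3 : (0:ℤ) ≤ ((e i : ℕ) : ℤ) := Int.natCast_nonneg _
    have hb4 : (0:ℤ) ≤ ((e' i : ℕ) : ℤ) := Int.natCast_nonneg _
    have hps : (2:ℤ) ^ ν ≤ 2 ^ s := pow_le_pow_right₀ (by norm_num) hν
    have hc0 : c = 0 := by
      rcases lt_trichotomy c 0 with h | h | h
      · exfalso
        have : (2:ℤ) ^ s * c ≤ -(2 ^ s) := by nlinarith [pow_pos (show (0:ℤ) < 2 by norm_num) s]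
        nlinarith
      · exact h
      · exfalso
        have : (2:ℤ) ^ s ≤ 2 ^ s * c := by nlinarith [pow_pos (show (0:ℤ) < 2 by norm_num) s]
        nlinarith
    rw [hc0, mul_zero] at hc
    omega
  exact_mod_cast le_trans (Nat.cast_le.mpr hcard) (by norm_num)

end MorreyAux

namespace MorreyAux

open scoped Classical in
lemma lattice_norm_one (d : ℕ) (u₁ p₁ : ℝ) (hp₁ : 0 < p₁) (hpu₁ : p₁ ≤ u₁) (j s : ℕ)
    (hs : (j : ℝ) * p₁ / u₁ ≤ s) :
    finMorreyNorm d u₁ p₁ j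
      (fun k => if inDyadic d j 0 k ∧ ∀ i, (2:ℤ) ^ s ∣ k i then 1 else 0) ≤ 1 := by
  have hu₁ : 0 < u₁ := lt_of_lt_of_le hp₁ hpu₁
  refine norm_le_of d u₁ p₁ j _ 1 fun ν m hsub => ?_
  have hsum : (∑' k : {k : Fin d → ℤ // inDyadic d ν m k},
      (‖(fun k : Fin d → ℤ => if inDyadic d j 0 k ∧ ∀ i, (2:ℤ) ^ s ∣ k i
          then (1:ℂ) else 0) k.1‖₊ : ℝ≥0∞) ^ p₁)
      = ∑' k : {k : Fin d → ℤ // inDyadic d ν m k},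
          (if ∀ i, (2:ℤ) ^ s ∣ k.1 i then (1:ℝ≥0∞) else 0) := by
    refine tsum_congr fun k => ?_
    rw [nnnorm_ite_pow hp₁]
    exact if_congr (and_iff_right (inDyadic_mono hsub k.2)) rfl rfl
  rcases le_total ν s with hν | hν
  · -- small cubes: at most one point
    have h1 := count_dvd_le_one d ν s hν m
    rw [hsum]
    calc ((2 : ℝ≥0∞) ^ (ν * d)) ^ (1 / u₁ - 1 / p₁) *
        (∑' k : {k : Fin d → ℤ // inDyadic d ν m k},
          (if ∀ i, (2:ℤ) ^ s ∣ k.1 i then (1:ℝ≥0∞) else 0)) ^ (1 / p₁)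
        ≤ ((2 : ℝ≥0∞) ^ (ν * d)) ^ (1 / u₁ - 1 / p₁) * 1 :=
          mul_le_mul_right (ENNReal.rpow_le_one h1 (by positivity)) _
    _ ≤ 1 := by
        rw [mul_one, prefactor_eq]
        refine E_le_one (mul_nonpos_of_nonneg_of_nonpos (Nat.cast_nonneg _) ?_)
        have := one_div_le_one_div_of_le hp₁ hpu₁
        linarith
  · -- large cubes: exact count
    rw [hsum, count_dvd d ν s hν m, prefactor_eq, pow_eq_E, E_rpow, ← E_add]
    refine E_le_one ?_
    have hcast : (((ν - s) * d : ℕ) : ℝ) = ((ν:ℝ) - s) * d := by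
      push_cast [Nat.cast_sub hν]
      ring
    rw [hcast]
    push_cast
    have hνj : (ν : ℝ) ≤ j := Nat.cast_le.mpr hsub.1
    have hjp : (j:ℝ) * p₁ ≤ (s:ℝ) * u₁ := by
      rw [div_le_iff₀ hu₁] at hs
      linarith
    have hkey : (ν:ℝ) * d * p₁ ≤ (s:ℝ) * d * u₁ := by
      nlinarith [Nat.cast_nonneg (α := ℝ) d, mul_le_mul_of_nonneg_right hjp
        (Nat.cast_nonneg (α := ℝ) d), mul_le_mul_of_nonneg_right
        (mul_le_mul_of_nonneg_right hνj (Nat.cast_nonneg (α := ℝ) d)) (le_of_lt hp₁)]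
    have hgoal : (ν:ℝ) * d / u₁ ≤ (s:ℝ) * d / p₁ := by
      rw [div_le_div_iff₀ hu₁ hp₁]
      nlinarith [hkey]
    have h1p : 0 < 1 / p₁ := by positivity
    have expand : (ν:ℝ) * d * (1 / u₁ - 1 / p₁) + ((ν:ℝ) - s) * d * (1 / p₁)
        = (ν:ℝ) * d / u₁ - (s:ℝ) * d / p₁ := by
      field_simp
      ring
    rw [expand]
    linarith

open scoped Classical in
lemma lattice_norm_two_ge (d : ℕ) (u₂ p₂ : ℝ) (hp₂ : 0 < p₂) (j s : ℕ) (hs : s ≤ j) :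
    E (((j * d : ℕ) : ℝ) * (1 / u₂ - 1 / p₂) + (((j - s) * d : ℕ) : ℝ) * (1 / p₂))
      ≤ finMorreyNorm d u₂ p₂ j
        (fun k => if inDyadic d j 0 k ∧ ∀ i, (2:ℤ) ^ s ∣ k i then 1 else 0) := by
  have hsubj : subCube d j j (0 : Fin d → ℤ) := by
    refine ⟨le_rfl, fun i => ?_⟩
    simp
  refine le_trans ?_ (term_le_norm d u₂ p₂ j j 0 _ hsubj)
  have hsum : (∑' k : {k : Fin d → ℤ // inDyadic d j 0 k},
      (‖(fun k : Fin d → ℤ => if inDyadic d j 0 k ∧ ∀ i, (2:ℤ) ^ s ∣ k i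
          then (1:ℂ) else 0) k.1‖₊ : ℝ≥0∞) ^ p₂)
      = ∑' k : {k : Fin d → ℤ // inDyadic d j 0 k},
          (if ∀ i, (2:ℤ) ^ s ∣ k.1 i then (1:ℝ≥0∞) else 0) := by
    refine tsum_congr fun k => ?_
    rw [nnnorm_ite_pow hp₂]
    exact if_congr (and_iff_right k.2) rfl rfl
  rw [hsum, count_dvd d j s hs 0, prefactor_eq, pow_eq_E, E_rpow, ← E_add]

end MorreyAux


set_option maxHeartbeats 1000000 in
open MorreyAux in
theorem finite_morrey_opNorm (d : ℕ) (hd : 0 < d) (u₁ p₁ u₂ p₂ : ℝ)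
    (hp₁ : 0 < p₁) (hpu₁ : p₁ ≤ u₁) (hp₂ : 0 < p₂) (hpu₂ : p₂ ≤ u₂) (j : ℕ) :
    ((p₂ ≤ p₁ ∧ u₁ ≤ u₂) → morreyOpNorm d u₁ p₁ u₂ p₂ j = 1) ∧
    ((p₁ < p₂ ∧ p₂ / u₂ ≤ p₁ / u₁) → morreyOpNorm d u₁ p₁ u₂ p₂ j = 1) ∧
    ((p₂ ≤ p₁ ∧ u₂ < u₁) →
      morreyOpNorm d u₁ p₁ u₂ p₂ j = ((2 : ℝ≥0∞) ^ (j * d)) ^ (1 / u₂ - 1 / u₁)) ∧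
    ((p₁ < p₂ ∧ p₁ / u₁ < p₂ / u₂) →
      ∃ c : ℝ≥0∞, 0 < c ∧ c ≤ 1 ∧ ∀ j' : ℕ,
        c * ((2 : ℝ≥0∞) ^ (j' * d)) ^ (1 / u₂ - p₁ / (u₁ * p₂)) ≤
            morreyOpNorm d u₁ p₁ u₂ p₂ j' ∧
        morreyOpNorm d u₁ p₁ u₂ p₂ j' ≤
            ((2 : ℝ≥0∞) ^ (j' * d)) ^ (1 / u₂ - p₁ / (u₁ * p₂))) := by
  classical
  have hu₁ : 0 < u₁ := lt_of_lt_of_le hp₁ hpu₁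
  have hu₂ : 0 < u₂ := lt_of_lt_of_le hp₂ hpu₂
  have hdelta : ∀ j : ℕ, 1 ≤ morreyOpNorm d u₁ p₁ u₂ p₂ j := fun j =>
    le_opNorm d u₁ p₁ u₂ p₂ j (fun k => if k = 0 then 1 else 0) 1
      (le_of_eq (delta_norm d u₁ p₁ hp₁ hpu₁ j))
      (le_of_eq (delta_norm d u₂ p₂ hp₂ hpu₂ j).symm)
  refine ⟨?_, ?_, ?_, ?_⟩
  · rintro ⟨h1, h2⟩
    refine le_antisymm ?_ (hdelta j)
    refine opNorm_le d u₁ p₁ u₂ p₂ j 1 fun lam hlam => ?_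
    refine norm_le_one_of_terms (A := 1 / u₂ - 1 / u₁) ?_ fun ν m hsub =>
      regimeA hp₁ hpu₁ hp₂ h1 hlam hsub
    have := one_div_le_one_div_of_le hu₁ h2
    linarith
  · rintro ⟨h1, h2⟩
    refine le_antisymm ?_ (hdelta j)
    refine opNorm_le d u₁ p₁ u₂ p₂ j 1 fun lam hlam => ?_
    refine norm_le_one_of_terms (A := 1 / u₂ - p₁ / (u₁ * p₂)) ?_ fun ν m hsub =>
      regimeB hp₁ hpu₁ hp₂ (le_of_lt h1) hlam hsub
    have key : 1 / u₂ ≤ p₁ / (u₁ * p₂) := by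
      rw [div_le_div_iff₀ hu₂ (by positivity)]
      rw [div_le_div_iff₀ hu₂ hu₁] at h2
      nlinarith
    linarith
  · rintro ⟨h1, h2⟩
    rw [prefactor_eq]
    refine le_antisymm ?_ ?_
    · refine opNorm_le d u₁ p₁ u₂ p₂ j _ fun lam hlam => ?_
      refine norm_le_pow_of_terms (A := 1 / u₂ - 1 / u₁) ?_ fun ν m hsub =>
        regimeA hp₁ hpu₁ hp₂ h1 hlam hsub
      have := one_div_le_one_div_of_le hu₂ (le_of_lt h2)
      linarith
    · refine le_opNorm d u₁ p₁ u₂ p₂ j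
        (fun k : Fin d → ℤ => if inDyadic d j 0 k
          then (((2:ℝ) ^ (-(((j * d : ℕ) : ℝ)) / u₁) : ℝ) : ℂ) else 0) _ ?_ ?_
      · refine norm_le_of d u₁ p₁ j _ 1 fun ν m hsub => ?_
        rw [const_witness d u₁ p₁ u₁ p₁ hp₁ hpu₁ hp₁ j ν m hsub]
        refine E_le_one ?_
        have hc : ((ν * d : ℕ) : ℝ) ≤ ((j * d : ℕ) : ℝ) :=
          Nat.cast_le.mpr (Nat.mul_le_mul_right d hsub.1)
        have h4 : ((ν * d : ℕ) : ℝ) / u₁ ≤ ((j * d : ℕ) : ℝ) / u₁ := by gcongr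
        linarith
      · have hsubj : subCube d j j (0 : Fin d → ℤ) := ⟨le_rfl, fun i => by norm_num⟩
        have hterm := const_witness d u₁ p₁ u₂ p₂ hp₁ hpu₁ hp₂ j j 0 hsubj
        have hle := term_le_norm d u₂ p₂ j j 0
          (fun k : Fin d → ℤ => if inDyadic d j 0 k
            then (((2:ℝ) ^ (-(((j * d : ℕ) : ℝ)) / u₁) : ℝ) : ℂ) else 0) hsubj
        rw [hterm] at hle
        refine le_trans (le_of_eq (congrArg E (by ring))) hle
  · rintro ⟨h1, h2⟩
    have hA : 0 ≤ 1 / u₂ - p₁ / (u₁ * p₂) := by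
      have key : p₁ / (u₁ * p₂) ≤ 1 / u₂ := by
        rw [div_le_div_iff₀ (by positivity) hu₂]
        rw [div_lt_div_iff₀ hu₁ hu₂] at h2
        nlinarith
      linarith
    refine ⟨E (-((d : ℝ)) / p₂), ?_, ?_, fun j' => ?_⟩
    · exact lt_of_le_of_ne zero_le (Ne.symm (E_ne_zero _))
    · refine E_le_one ?_
      have : (0:ℝ) ≤ (d : ℝ) / p₂ := by positivity
      rw [neg_div]
      linarith
    · constructor
      · set s : ℕ := ⌈(j' : ℝ) * p₁ / u₁⌉₊ with hsdef
        have hs1 : (j' : ℝ) * p₁ / u₁ ≤ s := Nat.le_ceil _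
        have hs2 : s ≤ j' := by
          rw [hsdef, Nat.ceil_le]
          calc (j' : ℝ) * p₁ / u₁ ≤ (j' : ℝ) * 1 := by
                rw [div_le_iff₀ hu₁]
                nlinarith [Nat.cast_nonneg (α := ℝ) j']
          _ = (j' : ℝ) := mul_one _
        have hs3 : (s : ℝ) ≤ (j' : ℝ) * p₁ / u₁ + 1 := by
          rw [hsdef]
          exact le_of_lt (Nat.ceil_lt_add_one (by positivity))
        refine le_trans ?_ (le_opNorm d u₁ p₁ u₂ p₂ j'
          (fun k => if inDyadic d j' 0 k ∧ ∀ i, (2:ℤ) ^ s ∣ k i then 1 else 0)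
          (E (((j' * d : ℕ) : ℝ) * (1 / u₂ - 1 / p₂) + (((j' - s) * d : ℕ) : ℝ) * (1 / p₂)))
          (lattice_norm_one d u₁ p₁ hp₁ hpu₁ j' s hs1)
          (lattice_norm_two_ge d u₂ p₂ hp₂ j' s hs2))
        rw [prefactor_eq, ← E_add]
        refine E_mono ?_
        have hcast : (((j' - s) * d : ℕ) : ℝ) = ((j' : ℝ) - s) * d := by
          push_cast [Nat.cast_sub hs2]
          ring
        rw [hcast]
        push_cast
        have key2 : (s : ℝ) * ((d : ℝ) / p₂) ≤ ((j' : ℝ) * p₁ / u₁ + 1) * ((d : ℝ) / p₂) :=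
          mul_le_mul_of_nonneg_right hs3 (by positivity)
        ring_nf at key2 ⊢
        nlinarith [key2]
      · rw [prefactor_eq]
        refine opNorm_le d u₁ p₁ u₂ p₂ j' _ fun lam hlam => ?_
        exact norm_le_pow_of_terms hA fun ν m hsub =>
          regimeB hp₁ hpu₁ hp₂ (le_of_lt h1) hlam hsub
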